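/- Let A be a set (alphabet), let S₁, …, S_m be finite semigroups each having trivial local monoids, let hᵢ be a semigroup morphism from the free semigroup on A to Sᵢ for 1 ≤ i ≤ m, and let N = |S₁| + ⋯ + |S_m|. Then for every word w over A of length ℓ > 2N + 2, the word v consisting of the first N+1 and the last N+1 letters of w satisfies hᵢ(v) = hᵢ(w) for all i ∈ {1,…,m}. In particular, every non-empty intersection of languages recognized by the morphisms h₁,…,h_m contains a word of length at most 2N + 2. -/

import Mathlib

/-- The element of the free semigroup on `A` corresponding to a (non-empty) word,
viewed inside the monoid `WithOne (FreeSemigroup A)`. -/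
def wordProd {A : Type*} (l : List A) : WithOne (FreeSemigroup A) :=
  (l.map fun a => ((FreeSemigroup.of a : FreeSemigroup A) : WithOne (FreeSemigroup A))).prod

section aux
variable {M : Type*} [Monoid M]

lemma myPowStab (a : M) {s r : ℕ} (h : a ^ (s + r) = a ^ s) :
    ∀ u, s ≤ u → ∀ j, a ^ (u + j * r) = a ^ u := by
  have h' : ∀ u, s ≤ u → a ^ (u + r) = a ^ u := by
    intro u hu
    have e1 : a ^ (u + r) = a ^ (u - s) * a ^ (s + r) := by
      rw [← pow_add]; congr 1; omega
    rw [e1, h, ← pow_add]; congr 1; omega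
  intro u hu j
  induction j with
  | zero => simp
  | succ j ih =>
      have e : u + (j + 1) * r = (u + j * r) + r := by ring
      rw [e, h' _ (le_trans hu (Nat.le_add_right _ _)), ih]

lemma myExistsIdemPow [Finite M] (a : M) : ∃ k, 0 < k ∧ a ^ k * a ^ k = a ^ k := by
  obtain ⟨x, y, hxy, he⟩ := Finite.exists_ne_map_eq_of_infinite (fun n : ℕ => a ^ (n + 1))
  wlog hlt : x < y generalizing x y
  · exact this y x hxy.symm he.symm ((hxy.lt_or_gt).resolve_left hlt)
  have hr : 0 < y - x := Nat.sub_pos_of_lt hlt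
  have hsr : a ^ ((x + 1) + (y - x)) = a ^ (x + 1) := by
    have e : (x + 1) + (y - x) = y + 1 := by omega
    rw [e]; exact he.symm
  refine ⟨(x + 1) * (y - x), by positivity, ?_⟩
  rw [← pow_add]
  exact myPowStab a hsr _ (Nat.le_mul_of_pos_right _ hr) _

end aux

section li
variable {S : Type*} [Semigroup S]

lemma myLiKey (hLI : ∀ e x : S, e * e = e → e * x * e = e) {e f : S}
    (he : e * e = e) (hf : f * f = f) (x : S) : e * x * f = e * f := by
  have hfe : f * e * f = f := hLI f e hf
  have h2 : e * (x * f * e) * e = e := hLI e (x * f * e) he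
  have h3 := congrArg (· * f) h2
  rw [← h3]
  simp only [mul_assoc]
  rw [← mul_assoc e e f, he, ← mul_assoc f e f, hfe]

lemma myCoePowNeOne (s : S) : ∀ k, 0 < k → ((s : WithOne S)) ^ k ≠ 1 := by
  intro k hk
  induction k with
  | zero => omega
  | succ k ih =>
      rcases Nat.eq_zero_or_pos k with hk0 | hk0
      · subst hk0; simpa using (WithOne.coe_ne_one : (s : WithOne S) ≠ 1)
      · obtain ⟨t, ht⟩ := WithOne.ne_one_iff_exists.mp (ih hk0)
        rw [pow_succ, ← ht, ← WithOne.coe_mul]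
        exact WithOne.coe_ne_one

lemma myLiKeyOne (hLI : ∀ e x : S, e * e = e → e * x * e = e) {e f : WithOne S}
    (he1 : e ≠ 1) (hf1 : f ≠ 1) (he : e * e = e) (hf : f * f = f) (x : WithOne S) :
    e * x * f = e * f := by
  obtain ⟨e', rfl⟩ := WithOne.ne_one_iff_exists.mp he1
  obtain ⟨f', rfl⟩ := WithOne.ne_one_iff_exists.mp hf1
  have he' : e' * e' = e' := WithOne.coe_inj.mp (by rw [WithOne.coe_mul]; exact he)
  have hf' : f' * f' = f' := WithOne.coe_inj.mp (by rw [WithOne.coe_mul]; exact hf)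
  rcases eq_or_ne x 1 with rfl | hx1
  · rw [mul_one]
  · obtain ⟨y, rfl⟩ := WithOne.ne_one_iff_exists.mp hx1
    rw [← WithOne.coe_mul, ← WithOne.coe_mul, ← WithOne.coe_mul]
    exact WithOne.coe_inj.mpr (myLiKey hLI he' hf' y)

end li

section word
variable {A : Type*}

lemma wordProd_append (l₁ l₂ : List A) :
    wordProd (l₁ ++ l₂) = wordProd l₁ * wordProd l₂ := by
  simp [wordProd]

lemma wordProd_exists : ∀ l : List A, l ≠ [] →
    ∃ v : FreeSemigroup A, wordProd l = ↑v ∧ v.length = l.length := by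
  intro l
  induction l with
  | nil => intro hl; exact absurd rfl hl
  | cons a l ih =>
      intro _
      rcases eq_or_ne l [] with rfl | hl
      · exact ⟨FreeSemigroup.of a, by simp [wordProd], rfl⟩
      · obtain ⟨v, hv, hlen⟩ := ih hl
        refine ⟨FreeSemigroup.of a * v, ?_, ?_⟩
        · have : wordProd (a :: l) = ↑(FreeSemigroup.of a) * wordProd l := by
            simp [wordProd]
          rw [this, hv, ← WithOne.coe_mul]
        · rw [FreeSemigroup.length_mul, FreeSemigroup.length_of, hlen]
          simp [Nat.add_comm]

lemma wordProd_cons_core : ∀ (l : List A) (a : A),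
    wordProd (a :: l) = ↑(⟨a, l⟩ : FreeSemigroup A) := by
  intro l
  induction l with
  | nil => intro a; simp [wordProd]; rfl
  | cons b l ih =>
      intro a
      have h1 : wordProd (a :: b :: l) = ↑(FreeSemigroup.of a) * wordProd (b :: l) := by
        simp [wordProd]
      rw [h1, ih b, ← WithOne.coe_mul]
      rfl

lemma wordProd_toList (u : FreeSemigroup A) : wordProd (u.head :: u.tail) = ↑u :=
  wordProd_cons_core u.tail u.head
end word

lemma myWithOneMapMul {α β : Type*} [Semigroup α] [Semigroup β] (f : α →ₙ* β)
    (x y : WithOne α) : WithOne.map f (x * y) = WithOne.map f x * WithOne.map f y := by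
  induction x using WithOne.cases_on <;> induction y using WithOne.cases_on <;>
    simp [← WithOne.coe_mul, map_mul]

section factor
variable {A : Type*} {T : Type*} [Semigroup T] [Fintype T]

lemma myFactor (φ : FreeSemigroup A →ₙ* T) (l : List A)
    (hlen : Fintype.card T < l.length) :
    ∃ (α γ e : WithOne T), e * e = e ∧ e ≠ 1 ∧
      WithOne.map φ (wordProd l) = α * e * γ := by
  classical
  set n := Fintype.card T with hn
  have hlnil : ∀ j : ℕ, l.take (j + 1) ≠ [] := by
    intro j
    have : 0 < (l.take (j + 1)).length := by
      rw [List.length_take]; omega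
    exact List.length_pos_iff.mp this
  have hch : ∀ j : ℕ, ∃ v : FreeSemigroup A,
      wordProd (l.take (j + 1)) = ↑v ∧ v.length = (l.take (j + 1)).length :=
    fun j => wordProd_exists _ (hlnil j)
  choose vv hvv _ using hch
  set ψ : Fin (n + 1) → T := fun j => φ (vv j) with hψ
  obtain ⟨j₁, j₂, hne, heq⟩ := Fintype.exists_ne_map_eq_of_card_lt ψ (by simp [hn])
  wlog hlt : (j₁ : ℕ) < (j₂ : ℕ) generalizing j₁ j₂
  · exact this j₂ j₁ hne.symm heq.symm
      ((Fin.val_ne_of_ne hne).lt_or_gt.resolve_left hlt)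
  set a := (j₁ : ℕ); set b := (j₂ : ℕ)
  have hb : b < n + 1 := j₂.isLt
  -- split take (b+1) = take (a+1) ++ mid
  have hsplit : l.take (b + 1) = l.take (a + 1) ++ (l.drop (a + 1)).take (b - a) := by
    have e1 : b + 1 = (a + 1) + (b - a) := by omega
    rw [e1]
    conv_lhs => rw [← List.take_append_drop (a + 1) (l.take ((a + 1) + (b - a)))]
    rw [List.take_take, min_eq_left (by omega), List.take_drop]
  set mid := (l.drop (a + 1)).take (b - a) with hmid
  have hmidne : mid ≠ [] := by
    have : 0 < mid.length := by
      rw [hmid, List.length_take, List.length_drop]; omega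
    exact List.length_pos_iff.mp this
  obtain ⟨vm, hvm, _⟩ := wordProd_exists mid hmidne
  set q : WithOne T := WithOne.map φ (wordProd (l.take (a + 1))) with hq
  set u : WithOne T := WithOne.map φ (wordProd mid) with hu
  have hu' : u = ↑(φ vm) := by rw [hu, hvm, WithOne.map_coe]
  have hqu : q * u = q := by
    have h1 : WithOne.map φ (wordProd (l.take (b + 1))) = q * u := by
      rw [hsplit, wordProd_append, myWithOneMapMul]
    have h2 : WithOne.map φ (wordProd (l.take (b + 1))) = ↑(ψ j₂) := by
      rw [hvv j₂, WithOne.map_coe]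
    have h3 : q = ↑(ψ j₁) := by
      rw [hq, hvv j₁, WithOne.map_coe]
    rw [← h1, h2, h3, heq]
  have hquk : ∀ k : ℕ, q * u ^ k = q := by
    intro k
    induction k with
    | zero => simp
    | succ k ih => rw [pow_succ, ← mul_assoc, ih, hqu]
  haveI : Finite (WithOne T) := inferInstanceAs (Finite (Option T))
  obtain ⟨k, hk, hidem⟩ := myExistsIdemPow u
  have hne1 : u ^ k ≠ 1 := by rw [hu']; exact myCoePowNeOne (φ vm) k hk
  refine ⟨q, WithOne.map φ (wordProd (l.drop (b + 1))), u ^ k, hidem, hne1, ?_⟩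
  have h1 : WithOne.map φ (wordProd (l.take (b + 1))) = q * u := by
    rw [hsplit, wordProd_append, myWithOneMapMul]
  conv_lhs => rw [← List.take_append_drop (b + 1) l, wordProd_append, myWithOneMapMul, h1, hqu,
    ← hquk k]

end factor

/-- Let `S₁, …, S_m` be finite semigroups with trivial local monoids, let
`hᵢ : A⁺ → Sᵢ` be semigroup morphisms and `N = |S₁| + ⋯ + |S_m|`. Then for every word
`w` of length `> 2N + 2`, the word `v` consisting of the first `N+1` and the last `N+1`
letters of `w` satisfies `hᵢ(v) = hᵢ(w)` for all `i`. In particular, every non-empty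
intersection of languages recognized by `h₁, …, h_m` contains a word of length at most
`2N + 2`. -/
theorem stmt_8 {A : Type*} {m : ℕ} (S : Fin m → Type*) [∀ i, Semigroup (S i)]
    [∀ i, Fintype (S i)]
    (hLI : ∀ i, ∀ e x : S i, e * e = e → e * x * e = e)
    (h : ∀ i, FreeSemigroup A →ₙ* S i)
    (N : ℕ) (hN : N = ∑ i, Fintype.card (S i)) :
    (∀ w : List A, 2 * N + 2 < w.length → ∀ i,
        WithOne.map (h i) (wordProd (w.take (N + 1) ++ w.drop (w.length - (N + 1)))) =
          WithOne.map (h i) (wordProd w)) ∧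
      ∀ P : ∀ i, Set (S i),
        (∃ u : FreeSemigroup A, ∀ i, h i u ∈ P i) →
          ∃ v : FreeSemigroup A, v.length ≤ 2 * N + 2 ∧ ∀ i, h i v ∈ P i := by
  have hcard : ∀ i, Fintype.card (S i) ≤ N := by
    intro i
    rw [hN]
    exact Finset.single_le_sum (f := fun j => Fintype.card (S j))
      (fun j _ => Nat.zero_le _) (Finset.mem_univ i)
  have part1 : ∀ w : List A, 2 * N + 2 < w.length → ∀ i,
      WithOne.map (h i) (wordProd (w.take (N + 1) ++ w.drop (w.length - (N + 1)))) =
        WithOne.map (h i) (wordProd w) := by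
    intro w hw i
    set P := w.take (N + 1) with hP
    set Q := w.drop (w.length - (N + 1)) with hQ
    set Mid := (w.take (w.length - (N + 1))).drop (N + 1) with hMid
    have hPQ : w = P ++ (Mid ++ Q) := by
      have h0 : w.take (w.length - (N + 1)) = P ++ Mid := by
        conv_lhs => rw [← List.take_append_drop (N + 1) (w.take (w.length - (N + 1)))]
        rw [List.take_take, min_eq_left (by omega)]
      conv_lhs => rw [← List.take_append_drop (w.length - (N + 1)) w, h0,
        List.append_assoc]
    have hPlen : Fintype.card (S i) < P.length := by
      rw [hP, List.length_take]
      have := hcard i; omega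
    have hQlen : Fintype.card (S i) < Q.length := by
      rw [hQ, List.length_drop]
      have := hcard i; omega
    obtain ⟨α, γ, e, hee, he1, hPfac⟩ := myFactor (h i) P hPlen
    obtain ⟨δ, ε, f, hff, hf1, hQfac⟩ := myFactor (h i) Q hQlen
    have key : ∀ X : WithOne (S i), α * e * γ * X * (δ * f * ε) = α * (e * f) * ε := by
      intro X
      have h1 : α * e * γ * X * (δ * f * ε) = α * (e * (γ * X * δ) * f) * ε := by
        simp only [mul_assoc]
      rw [h1, myLiKeyOne (hLI i) he1 hf1 hee hff]
    have hLHS : WithOne.map (h i) (wordProd (P ++ Q)) = α * (e * f) * ε := by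
      rw [wordProd_append, myWithOneMapMul, hPfac, hQfac]
      have := key 1
      rwa [mul_one] at this
    have hRHS : WithOne.map (h i) (wordProd (P ++ (Mid ++ Q))) = α * (e * f) * ε := by
      rw [wordProd_append, myWithOneMapMul, wordProd_append, myWithOneMapMul, hPfac, hQfac,
        ← mul_assoc]
      exact key _
    conv_rhs => rw [hPQ]
    rw [hLHS, hRHS]
  refine ⟨part1, ?_⟩
  rintro P ⟨u, hu⟩
  by_cases hlen : u.length ≤ 2 * N + 2
  · exact ⟨u, hlen, hu⟩
  · push_neg at hlen
    set w := u.head :: u.tail with hwdef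
    have hwlen : w.length = u.length := rfl
    have hw : 2 * N + 2 < w.length := by omega
    set l' := w.take (N + 1) ++ w.drop (w.length - (N + 1)) with hl'
    have hl'len : l'.length = 2 * N + 2 := by
      rw [hl', List.length_append, List.length_take, List.length_drop]
      omega
    have hl'ne : l' ≠ [] := List.length_pos_iff.mp (by omega)
    obtain ⟨v, hv, hvlen⟩ := wordProd_exists l' hl'ne
    refine ⟨v, by rw [hvlen, hl'len], fun i => ?_⟩
    have h1 := part1 w hw i
    have h2 : (↑(h i v) : WithOne (S i)) = ↑(h i u) := by
      rw [← WithOne.map_coe (h i) v, ← hv, h1, hwdef, wordProd_toList u, WithOne.map_coe]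
    rw [WithOne.coe_inj.mp h2]
    exact hu i
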